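/- Let $m \ge 2$, $p \ge 2$, let $G = G_1 \ast \cdots \ast G_m$ be the free product of $m$ finite groups each of order $p$, and let $k \ge 1$. In $\mathbb{C}[G^k]$, define $w^{(k)}_n = \sum_{|v| = n} \Delta(v)$ (sum over all $v \in G$ of length $n$, $\Delta$ the diagonal embedding), and let $\tau : \mathbb{C}[G^k] \to \mathbb{C}$ denote the coefficient of the identity element. Then for $x_1, \dots, x_k \in G$, there exists an integer $n \ge 0$ with $\tau\big((x_1, \dots, x_k) \cdot w^{(k)}_n\big) \ne 0$ if and only if $x_1 = x_2 = \cdots = x_k$. -/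

import Mathlib

open Monoid

/-- The length of an element of a free product: the number of letters in its
unique reduced word. -/
noncomputable def cplen {ι : Type*} {G : ι → Type*} [∀ i, Group (G i)]
    (g : CoprodI G) : ℕ := by
  classical exact (CoprodI.Word.equiv g).toList.length

/-- `w G k n` is the sum, in the group algebra `ℂ[G^k]`, of the diagonal images
of all elements of the free product `G` of length `n`. -/
noncomputable def w {ι : Type*} (G : ι → Type*) [∀ i, Group (G i)] (k n : ℕ) :
    MonoidAlgebra ℂ (Fin k → CoprodI G) :=
  ∑ᶠ v ∈ {v : CoprodI G | cplen v = n},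
    MonoidAlgebra.of ℂ (Fin k → CoprodI G) (fun _ => v)

lemma cplen_set_finite {ι : Type*} [Finite ι] {G : ι → Type*} [∀ i, Group (G i)]
    [∀ i, Finite (G i)] (n : ℕ) : {v : CoprodI G | cplen v = n}.Finite := by
  classical
  have hinj : Function.Injective
      (fun v : CoprodI G => (CoprodI.Word.equiv v).toList) := by
    intro a b hab
    have : CoprodI.Word.equiv a = CoprodI.Word.equiv b := CoprodI.Word.ext hab
    exact (CoprodI.Word.equiv).injective this
  have hfin : {l : List (Σ i, G i) | l.length = n}.Finite := by
    have := Fintype.ofFinite (Σ i, G i)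
    exact List.finite_length_eq _ n
  have : {v : CoprodI G | cplen v = n} ⊆
      (fun v : CoprodI G => (CoprodI.Word.equiv v).toList) ⁻¹'
        {l : List (Σ i, G i) | l.length = n} := by
    intro v hv; exact hv
  exact Set.Finite.subset (hfin.preimage hinj.injOn) this

theorem stmt_8 (m p k : ℕ) (hm : 2 ≤ m) (hp : 2 ≤ p) (hk : 1 ≤ k)
    (G : Fin m → Type*) [∀ i, Group (G i)] [∀ i, Fintype (G i)]
    (hcard : ∀ i, Fintype.card (G i) = p) (x : Fin k → CoprodI G) :
    (∃ n : ℕ, (MonoidAlgebra.of ℂ (Fin k → CoprodI G) x * w G k n).coeff 1 ≠ 0) ↔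
      ∀ i j : Fin k, x i = x j := by
  classical
  set i0 : Fin k := ⟨0, hk⟩ with hi0
  have key : ∀ n : ℕ, (MonoidAlgebra.of ℂ (Fin k → CoprodI G) x * w G k n).coeff 1 =
      ∑ v ∈ (cplen_set_finite (G := G) n).toFinset,
        (if x * (fun _ => v) = 1 then (1 : ℂ) else 0) := by
    intro n
    rw [w, finsum_mem_eq_finite_toFinset_sum _ (cplen_set_finite (G := G) n),
      Finset.mul_sum]
    rw [MonoidAlgebra.coeff_sum, Finsupp.finset_sum_apply]
    refine Finset.sum_congr rfl fun v _ => ?_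
    rw [MonoidAlgebra.of_apply, MonoidAlgebra.of_apply,
      MonoidAlgebra.single_mul_single, one_mul, MonoidAlgebra.coeff_single,
      Finsupp.single_apply]
  constructor
  · rintro ⟨n, hn⟩ i j
    rw [key n] at hn
    obtain ⟨v, _, hv⟩ := Finset.exists_ne_zero_of_sum_ne_zero hn
    have hv1 : x * (fun _ => v) = 1 := by
      by_contra h; simp [h] at hv
    have hx : ∀ i, x i = v⁻¹ := by
      intro i
      have := congrFun hv1 i
      simp only [Pi.mul_apply, Pi.one_apply] at this
      exact eq_inv_of_mul_eq_one_left this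
    rw [hx i, hx j]
  · intro hx
    refine ⟨cplen ((x i0)⁻¹), ?_⟩
    rw [key]
    have hmem : (x i0)⁻¹ ∈ (cplen_set_finite (G := G) (cplen ((x i0)⁻¹))).toFinset := by
      simp [Set.Finite.mem_toFinset]
    have hcond : ∀ v : CoprodI G,
        (x * (fun _ => v) = 1) ↔ v = (x i0)⁻¹ := by
      intro v
      constructor
      · intro h
        have := congrFun h i0
        simp only [Pi.mul_apply, Pi.one_apply] at this
        exact eq_inv_of_mul_eq_one_right this
      · intro h
        funext i
        simp only [Pi.mul_apply, Pi.one_apply, h, hx i i0, mul_inv_cancel]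
    rw [Finset.sum_congr rfl (fun v _ => by rw [if_congr (hcond v) rfl rfl])]
    rw [Finset.sum_ite_eq' _ ((x i0)⁻¹) (fun _ => (1:ℂ)), if_pos hmem]
    exact one_ne_zero
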